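/- Let C > 0, a > 0, b > 0 be real constants and define g(α) = (1−e^{−2α})/(2α) − ((1−e^{−α})/α)² for α > 0. Define F(N) = 2 − C·ln(1 + b·g(a/N)) for N > 0. Then F is continuous on (0,∞), F(N) → 2 as N → 0⁺, and F(N) → 2 as N → +∞. Moreover, if there exists N* > 0 with F(N*) < 0, then there exist N₁ and N₂ with 0 < N₁ < N* < N₂ such that F(N₁) = 0 and F(N₂) = 0. -/

import Mathlib

open Filter

/-- The paper's signal-variance function for exponential decay observed over a window of
dimensionless length `α`. -/
noncomputable def g (α : ℝ) : ℝ :=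
  (1 - Real.exp (-2 * α)) / (2 * α) - ((1 - Real.exp (-α)) / α) ^ 2

lemma pade (x : ℝ) (hx : 0 ≤ x) : 2 - x ≤ (2 + x) * Real.exp (-x) := by
  set f : ℝ → ℝ := fun t => (2 + t) * Real.exp (-t) + t with hf
  have hder : ∀ t : ℝ, HasDerivAt f (1 - (1 + t) * Real.exp (-t)) t := by
    intro t
    have h1 : HasDerivAt (fun t : ℝ => Real.exp (-t)) (-Real.exp (-t)) t := by
      simpa [Function.comp_def] using (Real.hasDerivAt_exp (-t)).comp t (hasDerivAt_neg t)
    have h2 : HasDerivAt (fun t : ℝ => (2 + t) * Real.exp (-t))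
        (1 * Real.exp (-t) + (2 + t) * (-Real.exp (-t))) t :=
      (((hasDerivAt_id t).const_add 2)).mul h1
    have := h2.add (hasDerivAt_id t)
    exact this.congr_deriv (by ring)
  have hmono : Monotone f := by
    apply monotone_of_deriv_nonneg
    · exact fun t => (hder t).differentiableAt
    · intro t
      rw [(hder t).deriv]
      have h1 : Real.exp t * Real.exp (-t) = 1 := by
        rw [← Real.exp_add]; simp
      nlinarith [Real.add_one_le_exp t, (Real.exp_pos (-t)).le]
  have := hmono hx
  have hf0 : f 0 = 2 := by simp [hf]
  simp only [hf] at this hf0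
  linarith [this, hf0.symm ▸ this]

lemma g_nonneg {α : ℝ} (hα : 0 < α) : 0 ≤ g α := by
  have hE0 : 0 < Real.exp (-α) := Real.exp_pos _
  have hE1 : Real.exp (-α) < 1 := Real.exp_lt_one_iff.mpr (by linarith)
  set E := Real.exp (-α) with hE
  have h2 : Real.exp (-2 * α) = E * E := by
    rw [hE, ← Real.exp_add]; ring_nf
  have key := pade α hα.le
  rw [g, h2]
  rw [sub_nonneg, div_pow, div_le_div_iff₀ (by positivity) (by positivity)]
  have hprod : 0 ≤ α * (1 - E) * ((2 + α) * E - (2 - α)) :=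
    mul_nonneg (mul_nonneg hα.le (by linarith)) (by linarith)
  nlinarith [hprod]

lemma g_cont : ContinuousOn g (Set.Ioi (0:ℝ)) := by
  apply ContinuousOn.sub
  · exact ContinuousOn.div (by fun_prop) (by fun_prop)
      (fun x hx => by have : (0:ℝ) < x := hx; positivity)
  · exact ContinuousOn.pow (ContinuousOn.div (by fun_prop) (by fun_prop)
      (fun x hx => ne_of_gt hx)) 2

lemma slope_lim : Tendsto (fun α : ℝ => (1 - Real.exp (-α)) / α)
    (nhdsWithin 0 (Set.Ioi 0)) (nhds 1) := by
  have h := (Real.hasDerivAt_exp 0).tendsto_slope_zero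
  have hneg : Tendsto (fun α : ℝ => -α) (nhdsWithin 0 (Set.Ioi 0))
      (nhdsWithin 0 {(0:ℝ)}ᶜ) := by
    apply tendsto_nhdsWithin_of_tendsto_nhds_of_eventually_within
    · simpa using (continuous_neg.tendsto (0:ℝ)).mono_left nhdsWithin_le_nhds
    · filter_upwards [self_mem_nhdsWithin] with x hx
      simp only [Set.mem_compl_iff, Set.mem_singleton_iff, neg_eq_zero]
      exact ne_of_gt hx
  have h2 := h.comp hneg
  simp only [Real.exp_zero] at h2
  refine h2.congr fun α => ?_
  simp only [Function.comp, zero_add, smul_eq_mul]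
  by_cases hα : α = 0
  · simp [hα]
  · rw [inv_neg, neg_mul, div_eq_inv_mul, ← mul_neg, neg_sub]

lemma g_lim_zero : Tendsto g (nhdsWithin 0 (Set.Ioi 0)) (nhds 0) := by
  have hdouble : Tendsto (fun α : ℝ => 2 * α) (nhdsWithin 0 (Set.Ioi 0))
      (nhdsWithin 0 (Set.Ioi 0)) := by
    apply tendsto_nhdsWithin_of_tendsto_nhds_of_eventually_within
    · simpa using ((continuous_mul_left (2:ℝ)).tendsto (0:ℝ)).mono_left
        nhdsWithin_le_nhds
    · filter_upwards [self_mem_nhdsWithin] with x hx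
      exact Set.mem_Ioi.mpr (by have : (0:ℝ) < x := hx; linarith)
  have h1 : Tendsto (fun α : ℝ => (1 - Real.exp (-(2*α))) / (2*α))
      (nhdsWithin 0 (Set.Ioi 0)) (nhds 1) := slope_lim.comp hdouble
  have h2 := (slope_lim.pow 2)
  have := h1.sub h2
  norm_num at this
  refine this.congr fun α => ?_
  simp only [g]
  ring_nf

lemma g_lim_top : Tendsto g atTop (nhds 0) := by
  have he2 : Tendsto (fun α : ℝ => Real.exp (-2 * α)) atTop (nhds 0) := by
    apply Real.tendsto_exp_atBot.comp
    have h := (tendsto_id.const_mul_atTop (by norm_num : (0:ℝ) < 2))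
    have := tendsto_neg_atTop_atBot.comp h
    refine this.congr fun x => by simp [Function.comp]
  have hnum : Tendsto (fun α : ℝ => 1 - Real.exp (-2 * α)) atTop (nhds 1) := by
    simpa using tendsto_const_nhds.sub he2
  have h1 : Tendsto (fun α : ℝ => (1 - Real.exp (-2 * α)) / (2 * α)) atTop (nhds 0) :=
    hnum.div_atTop (tendsto_id.const_mul_atTop (by norm_num : (0:ℝ) < 2))
  have he1 : Tendsto (fun α : ℝ => Real.exp (-α)) atTop (nhds 0) :=
    Real.tendsto_exp_atBot.comp tendsto_neg_atTop_atBot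
  have hnum1 : Tendsto (fun α : ℝ => 1 - Real.exp (-α)) atTop (nhds 1) := by
    simpa using tendsto_const_nhds.sub he1
  have h2 : Tendsto (fun α : ℝ => ((1 - Real.exp (-α)) / α) ^ 2) atTop (nhds 0) := by
    have := (hnum1.div_atTop tendsto_id).pow 2
    simpa using this
  have := h1.sub h2
  norm_num at this
  refine this.congr fun α => ?_
  simp only [g]
  ring_nf

theorem fixed_total_effort_two_crossovers (C a b : ℝ) (hC : 0 < C) (ha : 0 < a)
    (hb : 0 < b) (F : ℝ → ℝ) (hF : ∀ N : ℝ, F N = 2 - C * Real.log (1 + b * g (a / N))) :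
    ContinuousOn F (Set.Ioi (0 : ℝ)) ∧
    Tendsto F (nhdsWithin 0 (Set.Ioi 0)) (nhds 2) ∧
    Tendsto F atTop (nhds 2) ∧
    ∀ Nstar : ℝ, 0 < Nstar → F Nstar < 0 →
      ∃ N₁ N₂ : ℝ, 0 < N₁ ∧ N₁ < Nstar ∧ Nstar < N₂ ∧ F N₁ = 0 ∧ F N₂ = 0 := by
  have hgmap : ∀ N ∈ Set.Ioi (0:ℝ), a / N ∈ Set.Ioi (0:ℝ) :=
    fun N hN => Set.mem_Ioi.mpr (div_pos ha hN)
  have hpos : ∀ N : ℝ, 0 < N → 0 < 1 + b * g (a / N) := by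
    intro N hN
    have h1 := g_nonneg (div_pos ha hN)
    nlinarith
  -- continuity
  have hcg : ContinuousOn (fun N : ℝ => g (a / N)) (Set.Ioi 0) :=
    g_cont.comp (ContinuousOn.div continuousOn_const continuousOn_id
      fun x hx => ne_of_gt hx) hgmap
  have hFc : ContinuousOn F (Set.Ioi (0:ℝ)) := by
    have h1 : ContinuousOn (fun N : ℝ => 2 - C * Real.log (1 + b * g (a / N)))
        (Set.Ioi 0) := by
      apply continuousOn_const.sub
      apply continuousOn_const.mul
      exact ContinuousOn.log (continuousOn_const.add (continuousOn_const.mul hcg))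
        (fun x hx => ne_of_gt (hpos x hx))
    exact h1.congr fun N _ => hF N
  -- limit as N → 0⁺
  have hdiv0 : Tendsto (fun N : ℝ => a / N) (nhdsWithin 0 (Set.Ioi 0)) atTop := by
    have h := tendsto_inv_nhdsGT_zero.const_mul_atTop ha
    refine h.congr fun x => ?_
    rw [div_eq_mul_inv]
  have hFlim : ∀ (l : Filter ℝ), Tendsto (fun N : ℝ => g (a / N)) l (nhds 0) →
      Tendsto F l (nhds 2) := by
    intro l hg
    have h1 : Tendsto (fun N : ℝ => 1 + b * g (a / N)) l (nhds 1) := by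
      have h0 : Tendsto (fun N : ℝ => 1 + b * g (a / N)) l (nhds (1 + b * 0)) :=
        Tendsto.add tendsto_const_nhds (Tendsto.mul tendsto_const_nhds hg)
      simpa using h0
    have hlog : Tendsto (fun N : ℝ => Real.log (1 + b * g (a / N))) l (nhds 0) := by
      have := (Real.continuousAt_log one_ne_zero).tendsto.comp h1
      simpa [Function.comp_def] using this
    have h2 : Tendsto (fun N : ℝ => 2 - C * Real.log (1 + b * g (a / N))) l (nhds 2) := by
      have h0 : Tendsto (fun N : ℝ => 2 - C * Real.log (1 + b * g (a / N))) l
          (nhds (2 - C * 0)) :=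
        Tendsto.sub tendsto_const_nhds (Tendsto.mul tendsto_const_nhds hlog)
      simpa using h0
    exact h2.congr fun N => (hF N).symm
  have hlim0 : Tendsto F (nhdsWithin 0 (Set.Ioi 0)) (nhds 2) :=
    hFlim _ (g_lim_top.comp hdiv0)
  -- limit as N → ∞
  have hdivT : Tendsto (fun N : ℝ => a / N) atTop (nhdsWithin 0 (Set.Ioi 0)) := by
    apply tendsto_nhdsWithin_of_tendsto_nhds_of_eventually_within
    · exact tendsto_const_nhds.div_atTop tendsto_id
    · filter_upwards [eventually_gt_atTop 0] with N hN
      exact Set.mem_Ioi.mpr (div_pos ha hN)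
  have hlimT : Tendsto F atTop (nhds 2) := hFlim _ (g_lim_zero.comp hdivT)
  refine ⟨hFc, hlim0, hlimT, ?_⟩
  intro Nstar hNs hFNs
  -- find n near 0 with F n > 0
  have hev1 : ∀ᶠ N in nhdsWithin 0 (Set.Ioi 0), 0 < F N :=
    hlim0.eventually (eventually_gt_nhds (by norm_num))
  have hev2 : Set.Ioo (0:ℝ) Nstar ∈ nhdsWithin 0 (Set.Ioi 0) :=
    Ioo_mem_nhdsGT_of_mem (Set.mem_Ico.mpr ⟨le_refl 0, hNs⟩)
  obtain ⟨n, hn1, hn2⟩ := (hev1.and hev2).exists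
  obtain ⟨hn0, hnlt⟩ := hn2
  -- IVT on [n, Nstar]
  have hsub1 : Set.Icc n Nstar ⊆ Set.Ioi (0:ℝ) :=
    fun x hx => lt_of_lt_of_le hn0 hx.1
  obtain ⟨N₁, hN₁mem, hN₁⟩ := intermediate_value_Icc' hnlt.le (hFc.mono hsub1)
    (Set.mem_Icc.mpr ⟨hFNs.le, hn1.le⟩)
  -- find m large with F m > 0
  have hev3 : ∀ᶠ N in atTop, 0 < F N :=
    hlimT.eventually (eventually_gt_nhds (by norm_num))
  obtain ⟨m, hm1, hm2⟩ := (hev3.and (eventually_gt_atTop Nstar)).exists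
  have hsub2 : Set.Icc Nstar m ⊆ Set.Ioi (0:ℝ) :=
    fun x hx => lt_of_lt_of_le hNs hx.1
  obtain ⟨N₂, hN₂mem, hN₂⟩ := intermediate_value_Icc hm2.le (hFc.mono hsub2)
    (Set.mem_Icc.mpr ⟨hFNs.le, hm1.le⟩)
  refine ⟨N₁, N₂, lt_of_lt_of_le hn0 hN₁mem.1, ?_, ?_, hN₁, hN₂⟩
  · exact lt_of_le_of_ne hN₁mem.2 (fun h => by rw [h] at hN₁; linarith)
  · exact lt_of_le_of_ne hN₂mem.1 (fun h => by rw [← h] at hN₂; linarith)
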